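/- arXiv:2010.03393 — 2 statements merged into one kernel-verified Lean document; each statement's English description precedes it below -/
import Mathlib

section
/- A graph H contains a predator if and only if its associated bipartite graph H* contains an incomparable C4, i.e., a predator (a'_1, a'_2, b''_1, b''_2) consisting of four distinct vertices forming a 4-cycle in which the two vertices on each side of the bipartition are incomparable. -/
def nbhd {β : Type*} (Hadj : β → β → Prop) (v : β) : Set β := {u | Hadj v u}

def Incomp {β : Type*} (Hadj : β → β → Prop) (u v : β) : Prop :=
  ¬ (nbhd Hadj u ⊆ nbhd Hadj v) ∧ ¬ (nbhd Hadj v ⊆ nbhd Hadj u)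

def IncompSet {β : Type*} (Hadj : β → β → Prop) (S : Set β) : Prop :=
  ∀ u ∈ S, ∀ v ∈ S, u ≠ v → Incomp Hadj u v

def IsPredator {β : Type*} (Hadj : β → β → Prop) (a₁ a₂ b₁ b₂ : β) : Prop :=
  a₁ ≠ a₂ ∧ b₁ ≠ b₂ ∧ IncompSet Hadj {a₁, a₂} ∧ IncompSet Hadj {b₁, b₂} ∧
    ∀ a ∈ ({a₁, a₂} : Set β), ∀ b ∈ ({b₁, b₂} : Set β), Hadj a b

/-- The associated bipartite graph `H* = H × K₂`: vertices `a' = Sum.inl a` and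
`a'' = Sum.inr a`, with `a'b''` an edge whenever `ab ∈ E(H)`. -/
def starAdj {β : Type*} (Hadj : β → β → Prop) : β ⊕ β → β ⊕ β → Prop
  | Sum.inl a, Sum.inr b => Hadj a b
  | Sum.inr a, Sum.inl b => Hadj b a
  | _, _ => False

lemma subL {β : Type*} (Hadj : β → β → Prop) (a a' : β) :
    nbhd (starAdj Hadj) (Sum.inl a) ⊆ nbhd (starAdj Hadj) (Sum.inl a') ↔
    nbhd Hadj a ⊆ nbhd Hadj a' := by
  constructor
  · intro h b hb
    exact h (show Sum.inr b ∈ nbhd (starAdj Hadj) (Sum.inl a) from hb)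
  · intro h u hu
    cases u with
    | inl c => exact absurd hu (by simp [nbhd, starAdj])
    | inr c => exact h hu

lemma subR {β : Type*} (Hadj : β → β → Prop) (hsymm : Symmetric Hadj) (b b' : β) :
    nbhd (starAdj Hadj) (Sum.inr b) ⊆ nbhd (starAdj Hadj) (Sum.inr b') ↔
    nbhd Hadj b ⊆ nbhd Hadj b' := by
  constructor
  · intro h a ha
    exact hsymm (h (show Sum.inl a ∈ nbhd (starAdj Hadj) (Sum.inr b) from hsymm ha))
  · intro h u hu
    cases u with
    | inl c => exact hsymm (h (hsymm hu))
    | inr c => exact absurd hu (by simp [nbhd, starAdj])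

lemma incompL {β : Type*} (Hadj : β → β → Prop) (a a' : β) :
    Incomp (starAdj Hadj) (Sum.inl a) (Sum.inl a') ↔ Incomp Hadj a a' := by
  unfold Incomp; rw [subL, subL]

lemma incompR {β : Type*} (Hadj : β → β → Prop) (hsymm : Symmetric Hadj) (b b' : β) :
    Incomp (starAdj Hadj) (Sum.inr b) (Sum.inr b') ↔ Incomp Hadj b b' := by
  unfold Incomp; rw [subR Hadj hsymm, subR Hadj hsymm]

lemma incompPairL {β : Type*} (Hadj : β → β → Prop) (a a' : β) :
    IncompSet (starAdj Hadj) {Sum.inl a, Sum.inl a'} ↔ IncompSet Hadj {a, a'} := by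
  constructor
  · rintro h u (rfl | rfl) v (rfl | rfl) huv
    · exact absurd rfl huv
    · exact (incompL Hadj _ _).1 (h _ (by simp) _ (by simp) (by simp [huv]))
    · exact (incompL Hadj _ _).1 (h _ (by simp) _ (by simp) (by simp [huv]))
    · exact absurd rfl huv
  · rintro h u (rfl | rfl) v (rfl | rfl) huv
    · exact absurd rfl huv
    · exact (incompL Hadj _ _).2 (h _ (by simp) _ (by simp) (by simpa using huv))
    · exact (incompL Hadj _ _).2 (h _ (by simp) _ (by simp) (by simpa using huv))
    · exact absurd rfl huv

lemma incompPairR {β : Type*} (Hadj : β → β → Prop) (hsymm : Symmetric Hadj) (b b' : β) :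
    IncompSet (starAdj Hadj) {Sum.inr b, Sum.inr b'} ↔ IncompSet Hadj {b, b'} := by
  constructor
  · rintro h u (rfl | rfl) v (rfl | rfl) huv
    · exact absurd rfl huv
    · exact (incompR Hadj hsymm _ _).1 (h _ (by simp) _ (by simp) (by simp [huv]))
    · exact (incompR Hadj hsymm _ _).1 (h _ (by simp) _ (by simp) (by simp [huv]))
    · exact absurd rfl huv
  · rintro h u (rfl | rfl) v (rfl | rfl) huv
    · exact absurd rfl huv
    · exact (incompR Hadj hsymm _ _).2 (h _ (by simp) _ (by simp) (by simpa using huv))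
    · exact (incompR Hadj hsymm _ _).2 (h _ (by simp) _ (by simp) (by simpa using huv))
    · exact absurd rfl huv

/-- `H` contains a predator iff `H*` contains an incomparable `C₄`, i.e. a
predator `(a₁', a₂', b₁'', b₂'')` (four distinct vertices of `H*` forming a
4-cycle with the two vertices on each side of the bipartition incomparable). -/
theorem stmt2 {β : Type*} (Hadj : β → β → Prop) (hsymm : Symmetric Hadj) :
    (∃ a₁ a₂ b₁ b₂ : β, IsPredator Hadj a₁ a₂ b₁ b₂) ↔
    (∃ a₁ a₂ b₁ b₂ : β, IsPredator (starAdj Hadj)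
      (Sum.inl a₁) (Sum.inl a₂) (Sum.inr b₁) (Sum.inr b₂)) := by
  constructor
  · rintro ⟨a₁, a₂, b₁, b₂, hne₁, hne₂, hA, hB, hE⟩
    refine ⟨a₁, a₂, b₁, b₂, by simp [hne₁], by simp [hne₂],
      (incompPairL Hadj _ _).2 hA, (incompPairR Hadj hsymm _ _).2 hB, ?_⟩
    rintro u (rfl | rfl) v (rfl | rfl)
    · exact hE a₁ (by simp) b₁ (by simp)
    · exact hE a₁ (by simp) b₂ (by simp)
    · exact hE a₂ (by simp) b₁ (by simp)
    · exact hE a₂ (by simp) b₂ (by simp)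
  · rintro ⟨a₁, a₂, b₁, b₂, hne₁, hne₂, hA, hB, hE⟩
    refine ⟨a₁, a₂, b₁, b₂, by simpa using hne₁, by simpa using hne₂,
      (incompPairL Hadj _ _).1 hA, (incompPairR Hadj hsymm _ _).1 hB, ?_⟩
    rintro u (rfl | rfl) v (rfl | rfl)
    · exact hE _ (Or.inl rfl) _ (Or.inl rfl)
    · exact hE _ (Or.inl rfl) _ (Or.inr rfl)
    · exact hE _ (Or.inr rfl) _ (Or.inl rfl)
    · exact hE _ (Or.inr rfl) _ (Or.inr rfl)
end

section
/- Let H be a strong split graph with loop-vertices P (inducing a reflexive clique) and loopless vertices B (independent). Let (G, L) be a list-homomorphism instance for H in which every list L(v) is a nonempty incomparable set. Let X = {v : L(v) ∩ P ≠ ∅} and Y = {v : L(v) ∩ B ≠ ∅}. Then X and Y partition V(G); moreover if Y is independent in G and G' is obtained from G by adding all edges inside X, then (G, L) admits a list homomorphism to H if and only if (G', L) does. -/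
/-- Existence of a list homomorphism from `(G, L)` to `H`. -/
def ListHomEx {α β : Type*} (Gadj : α → α → Prop) (Hadj : β → β → Prop)
    (L : α → Set β) : Prop :=
  ∃ f : α → β, (∀ v, f v ∈ L v) ∧ ∀ u v, Gadj u v → Hadj (f u) (f v)

/-- Strong split target `H` with loop-part `P` (reflexive clique) and
independent loopless part `B`.  For a list instance with nonempty incomparable
lists, `X := {v : L v ∩ P ≠ ∅}` and `Y := {v : L v ∩ B ≠ ∅}` partition `V(G)`;
and if `Y` is independent in `G`, then completing `X` to a clique does not
change the existence of a list homomorphism. -/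
theorem stmt5 {α β : Type*} (Gadj : α → α → Prop) (hGsymm : Symmetric Gadj)
    (Hadj : β → β → Prop) (hHsymm : Symmetric Hadj)
    (P B : Set β) (hPB : P ∪ B = Set.univ) (hPBdisj : P ∩ B = ∅)
    (hPclique : ∀ p ∈ P, ∀ q ∈ P, Hadj p q)
    (hBindep : ∀ b ∈ B, ∀ b' ∈ B, ¬ Hadj b b')
    (L : α → Set β)
    (hLne : ∀ v, (L v).Nonempty) (hLinc : ∀ v, IncompSet Hadj (L v)) :
    (∀ v : α,
        (((L v ∩ P).Nonempty ∨ (L v ∩ B).Nonempty) ∧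
          ¬ ((L v ∩ P).Nonempty ∧ (L v ∩ B).Nonempty))) ∧
    ((∀ u v : α, (L u ∩ B).Nonempty → (L v ∩ B).Nonempty → ¬ Gadj u v) →
      (ListHomEx Gadj Hadj L ↔
        ListHomEx (fun u v => Gadj u v ∨
          ((L u ∩ P).Nonempty ∧ (L v ∩ P).Nonempty ∧ u ≠ v)) Hadj L)) := by
  have hPorB : ∀ x : β, x ∈ P ∨ x ∈ B := by
    intro x
    have : x ∈ P ∪ B := by rw [hPB]; trivial
    exact this
  -- key: no list meets both P and B
  have hnotboth : ∀ v : α, ¬ ((L v ∩ P).Nonempty ∧ (L v ∩ B).Nonempty) := by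
    rintro v ⟨⟨p, hpL, hpP⟩, ⟨b, hbL, hbB⟩⟩
    have hpb : p ≠ b := by
      rintro rfl
      have : p ∈ P ∩ B := ⟨hpP, hbB⟩
      rw [hPBdisj] at this; exact this
    have hinc := hLinc v b hbL p hpL (Ne.symm hpb)
    apply hinc.1
    intro q hq
    have hq' : Hadj b q := hq
    have hqP : q ∈ P := by
      rcases hPorB q with h | h
      · exact h
      · exact absurd hq' (hBindep b hbB q h)
    exact hPclique p hpP q hqP
  have hpart : ∀ v : α,
      (((L v ∩ P).Nonempty ∨ (L v ∩ B).Nonempty) ∧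
        ¬ ((L v ∩ P).Nonempty ∧ (L v ∩ B).Nonempty)) := by
    intro v
    refine ⟨?_, hnotboth v⟩
    obtain ⟨x, hx⟩ := hLne v
    rcases hPorB x with h | h
    · exact Or.inl ⟨x, hx, h⟩
    · exact Or.inr ⟨x, hx, h⟩
  refine ⟨hpart, fun _ => ⟨?_, ?_⟩⟩
  · rintro ⟨f, hfL, hfE⟩
    refine ⟨f, hfL, ?_⟩
    intro u v huv
    rcases huv with h | ⟨huP, hvP, _⟩
    · exact hfE u v h
    · have hfuP : f u ∈ P := by
        rcases hPorB (f u) with h | h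
        · exact h
        · exact absurd ⟨huP, ⟨f u, hfL u, h⟩⟩ (hnotboth u)
      have hfvP : f v ∈ P := by
        rcases hPorB (f v) with h | h
        · exact h
        · exact absurd ⟨hvP, ⟨f v, hfL v, h⟩⟩ (hnotboth v)
      exact hPclique _ hfuP _ hfvP
  · rintro ⟨f, hfL, hfE⟩
    exact ⟨f, hfL, fun u v h => hfE u v (Or.inl h)⟩
end
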